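/- Generic super-regularity in complete subspaces: let F be a set of nonexpansive maps on X and let d be a distance function on F (nonnegative, symmetric, satisfying the triangle inequality, and with d(T₁, T₂) = 0 iff T₁ = T₂) such that every d-Cauchy sequence in F d-converges to an element of F, d(T₁, T₂) ≥ ρ(T₁, T₂) for all T₁, T₂ ∈ F, and the set of contractions belonging to F is d-dense in F (for every T ∈ F and ε > 0 there is a contraction C ∈ F with d(C, T) < ε). Then there exists a sequence (O_q) of subsets of F, each d-open in F and d-dense in F, such that every T ∈ ⋂_q O_q is super-regular; in particular each such T has a unique fixed point. -/

import Mathlib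

open RealInnerProductSpace Filter

variable {X : Type*} [NormedAddCommGroup X] [InnerProductSpace ℝ X] [CompleteSpace X]

/-- `T` is nonexpansive. -/
def Nonexpansive (T : X → X) : Prop := ∀ x y : X, ‖T x - T y‖ ≤ ‖x - y‖

/-- `T` is firmly nonexpansive. -/
def FirmlyNonexpansive (T : X → X) : Prop :=
  ∀ x y : X, ‖T x - T y‖ ^ 2 ≤ ⟪x - y, T x - T y⟫

/-- `‖T₁ - T₂‖ₙ = sup_{‖x‖ ≤ n} ‖T₁ x - T₂ x‖`. -/
noncomputable def ballSup (T₁ T₂ : X → X) (n : ℕ) : ℝ :=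
  sSup {r : ℝ | ∃ x : X, ‖x‖ ≤ (n : ℝ) ∧ r = ‖T₁ x - T₂ x‖}

/-- The metric `ρ` on nonexpansive maps. -/
noncomputable def rho (T₁ T₂ : X → X) : ℝ :=
  ∑' n : ℕ, (1 / 2 ^ (n + 1)) *
    (ballSup T₁ T₂ (n + 1) / (1 + ballSup T₁ T₂ (n + 1)))

/-- The metric `ρ̂` on firmly nonexpansive maps: `ρ̂(T₁,T₂) = ρ(2T₁ - Id, 2T₂ - Id)`. -/
noncomputable def rhoHat (T₁ T₂ : X → X) : ℝ :=
  rho (fun x => (2 : ℝ) • T₁ x - x) (fun x => (2 : ℝ) • T₂ x - x)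

/-- `T` is super-regular with limit point `xT`. -/
def SuperRegularAt (T : X → X) (xT : X) : Prop :=
  ∀ s : ℝ, 0 < s → ∀ ε : ℝ, 0 < ε → ∃ N : ℕ, ∀ n ≥ N, ∀ x : X, ‖x‖ ≤ s → ‖T^[n] x - xT‖ < ε

/-- `T` is super-regular. -/
def SuperRegular (T : X → X) : Prop := ∃ xT : X, SuperRegularAt T xT

/-- `T` is a (Banach) contraction. -/
def Contraction (T : X → X) : Prop :=
  ∃ l : ℝ, 0 ≤ l ∧ l < 1 ∧ ∀ x y : X, ‖T x - T y‖ ≤ l * ‖x - y‖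

set_option linter.unusedSectionVars false

lemma Nonexpansive.iterate {T : X → X} (hT : Nonexpansive T) (n : ℕ) (x y : X) :
    ‖T^[n] x - T^[n] y‖ ≤ ‖x - y‖ := by
  induction n with
  | zero => simp
  | succ n ih =>
    rw [Function.iterate_succ_apply', Function.iterate_succ_apply']
    exact (hT _ _).trans ih

lemma norm_sub_le_three (a b c : X) : ‖a - c‖ ≤ ‖a - b‖ + ‖b - c‖ := by
  rw [show a - c = (a - b) + (b - c) by abel]
  exact norm_add_le _ _

lemma le_ballSup {T₁ T₂ : X → X} (h1 : Nonexpansive T₁) (h2 : Nonexpansive T₂)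
    {n : ℕ} {x : X} (hx : ‖x‖ ≤ (n : ℝ)) : ‖T₁ x - T₂ x‖ ≤ ballSup T₁ T₂ n := by
  apply le_csSup
  · refine ⟨2 * (n : ℝ) + ‖T₁ 0 - T₂ 0‖, ?_⟩
    rintro r ⟨y, hy, rfl⟩
    have h₁ : ‖T₁ y - T₁ 0‖ ≤ ‖y‖ := by simpa using h1 y 0
    have h₂ : ‖T₂ 0 - T₂ y‖ ≤ ‖y‖ := by simpa [norm_sub_rev] using h2 0 y
    have htri : ‖T₁ y - T₂ y‖ ≤ ‖T₁ y - T₁ 0‖ + ‖T₁ 0 - T₂ 0‖ + ‖T₂ 0 - T₂ y‖ := by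
      calc ‖T₁ y - T₂ y‖ ≤ ‖T₁ y - T₁ 0‖ + ‖T₁ 0 - T₂ y‖ := norm_sub_le_three _ _ _
        _ ≤ ‖T₁ y - T₁ 0‖ + (‖T₁ 0 - T₂ 0‖ + ‖T₂ 0 - T₂ y‖) :=
            add_le_add le_rfl (norm_sub_le_three _ _ _)
        _ = _ := by ring
    linarith
  · exact ⟨x, hx, rfl⟩

lemma ballSup_nonneg {T₁ T₂ : X → X} (h1 : Nonexpansive T₁) (h2 : Nonexpansive T₂) (n : ℕ) :
    0 ≤ ballSup T₁ T₂ n :=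
  le_trans (norm_nonneg _) (le_ballSup h1 h2 (x := 0) (by simp))

lemma rho_summand_summable {T₁ T₂ : X → X} (h1 : Nonexpansive T₁) (h2 : Nonexpansive T₂) :
    Summable (fun n : ℕ => (1 / 2 ^ (n + 1) : ℝ) *
      (ballSup T₁ T₂ (n + 1) / (1 + ballSup T₁ T₂ (n + 1)))) := by
  refine Summable.of_nonneg_of_le ?_ ?_
    (summable_geometric_of_lt_one (by norm_num) (by norm_num) : Summable fun n : ℕ => (1/2:ℝ)^n)
  · intro n
    have hb := ballSup_nonneg h1 h2 (n + 1)
    positivity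
  · intro n
    have hb := ballSup_nonneg h1 h2 (n + 1)
    have hfrac : ballSup T₁ T₂ (n+1) / (1 + ballSup T₁ T₂ (n+1)) ≤ 1 := by
      rw [div_le_one (by linarith)]; linarith
    have h2n : (1 / 2 ^ (n + 1) : ℝ) ≤ (1/2 : ℝ) ^ n := by
      rw [one_div, ← inv_pow]
      calc ((2:ℝ)⁻¹) ^ (n+1) ≤ ((2:ℝ)⁻¹) ^ n := by
            apply pow_le_pow_of_le_one (by norm_num) (by norm_num); omega
        _ = (1/2:ℝ)^n := by norm_num
    calc (1 / 2 ^ (n + 1) : ℝ) * (ballSup T₁ T₂ (n+1) / (1 + ballSup T₁ T₂ (n+1)))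
        ≤ (1 / 2 ^ (n + 1) : ℝ) * 1 := by
          apply mul_le_mul_of_nonneg_left hfrac; positivity
      _ ≤ (1/2:ℝ)^n := by rw [mul_one]; exact h2n

lemma ballSup_frac_le_rho {T₁ T₂ : X → X} (h1 : Nonexpansive T₁) (h2 : Nonexpansive T₂) (k : ℕ) :
    ballSup T₁ T₂ (k+1) / (1 + ballSup T₁ T₂ (k+1)) ≤ 2 ^ (k+1) * rho T₁ T₂ := by
  have hsum := rho_summand_summable h1 h2
  have hle : (1 / 2 ^ (k + 1) : ℝ) * (ballSup T₁ T₂ (k+1) / (1 + ballSup T₁ T₂ (k+1)))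
      ≤ rho T₁ T₂ := by
    apply Summable.le_tsum hsum k
    intro j _
    have hb := ballSup_nonneg h1 h2 (j + 1)
    positivity
  have h2k : (0:ℝ) < 2 ^ (k+1) := by positivity
  calc ballSup T₁ T₂ (k+1) / (1 + ballSup T₁ T₂ (k+1))
      = 2 ^ (k+1) * ((1 / 2 ^ (k + 1) : ℝ) *
        (ballSup T₁ T₂ (k+1) / (1 + ballSup T₁ T₂ (k+1)))) := by
        rw [one_div, ← mul_assoc, mul_inv_cancel₀ (ne_of_gt h2k), one_mul]
    _ ≤ 2 ^ (k+1) * rho T₁ T₂ := by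
        apply mul_le_mul_of_nonneg_left hle h2k.le

lemma lt_of_frac_lt {a b : ℝ} (ha : 0 ≤ a) (hb : 0 ≤ b) (h : a / (1 + a) < b / (1 + b)) :
    a < b := by
  rw [div_lt_div_iff₀ (by linarith) (by linarith)] at h
  nlinarith

lemma Contraction.exists_fixedPoint {C : X → X} (hC : Contraction C) :
    ∃ z l, C z = z ∧ 0 ≤ l ∧ l < 1 ∧ ∀ (n : ℕ) (x : X), ‖C^[n] x - z‖ ≤ l ^ n * ‖x - z‖ := by
  obtain ⟨l, hl0, hl1, hl⟩ := hC
  have : Nonempty X := ⟨0⟩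
  have hlip : LipschitzWith (Real.toNNReal l) C := by
    apply LipschitzWith.of_dist_le_mul
    intro x y
    rw [dist_eq_norm, dist_eq_norm, Real.coe_toNNReal l hl0]
    exact hl x y
  have hK1 : Real.toNNReal l < 1 := by
    have h : (Real.toNNReal l : ℝ) < ((1 : NNReal) : ℝ) := by
      rw [Real.coe_toNNReal l hl0]; simpa using hl1
    exact_mod_cast h
  have hcw : ContractingWith (Real.toNNReal l) C := ⟨hK1, hlip⟩
  refine ⟨hcw.fixedPoint C, l, hcw.fixedPoint_isFixedPt, hl0, hl1, ?_⟩
  intro n x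
  induction n with
  | zero => simp
  | succ n ih =>
    rw [Function.iterate_succ_apply']
    calc ‖C (C^[n] x) - hcw.fixedPoint C‖ = ‖C (C^[n] x) - C (hcw.fixedPoint C)‖ := by
          rw [hcw.fixedPoint_isFixedPt]
      _ ≤ l * ‖C^[n] x - hcw.fixedPoint C‖ := hl _ _
      _ ≤ l * (l ^ n * ‖x - hcw.fixedPoint C‖) := by
          apply mul_le_mul_of_nonneg_left ih hl0
      _ = l ^ (n+1) * ‖x - hcw.fixedPoint C‖ := by ring

lemma key_contraction {C : X → X} (hCne : Nonexpansive C) (hC : Contraction C) (q : ℕ) :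
    ∃ r > (0:ℝ), ∀ S : X → X, Nonexpansive S → rho S C < r →
      ∃ y : X, ∃ N : ℕ, ∀ n ≥ N, ∀ x : X, ‖x‖ ≤ (q:ℝ) → ‖S^[n] x - y‖ ≤ 1/((q:ℝ)+1) := by
  obtain ⟨z, l, hz, hl0, hl1, hrate⟩ := hC.exists_fixedPoint
  set m : ℕ := max q (⌈‖z‖ + 1⌉₊) with hm_def
  have hmq : (q:ℝ) ≤ (m:ℝ) := by exact_mod_cast le_max_left q (⌈‖z‖ + 1⌉₊)
  have hmz : ‖z‖ + 1 ≤ (m:ℝ) :=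
    le_trans (Nat.le_ceil _) (by exact_mod_cast le_max_right q (⌈‖z‖ + 1⌉₊))
  have hm0 : (0:ℝ) ≤ (m:ℝ) := Nat.cast_nonneg m
  set ε : ℝ := 1 / (2 * ((q:ℝ) + 1)) with hε_def
  have hq0 : (0:ℝ) ≤ (q:ℝ) := Nat.cast_nonneg q
  have hεpos : 0 < ε := by rw [hε_def]; positivity
  have hε1 : ε ≤ 1/2 := by
    rw [hε_def]
    rw [div_le_div_iff₀ (by linarith) (by norm_num)]
    linarith
  -- choose N
  obtain ⟨N₀, hN₀⟩ := exists_pow_lt_of_lt_one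
    (show (0:ℝ) < ε/2/((m:ℝ) + ‖z‖ + 1) by positivity) hl1
  set N : ℕ := max N₀ 1 with hN_def
  have hN1 : 1 ≤ N := le_max_right _ _
  have hNR : (0:ℝ) < (N:ℝ) := by exact_mod_cast hN1
  have hNrate : l ^ N * ((m:ℝ) + ‖z‖) ≤ ε/2 := by
    have h1 : l ^ N ≤ l ^ N₀ := pow_le_pow_of_le_one hl0 hl1.le (le_max_left _ _)
    have hpos : (0:ℝ) < (m:ℝ) + ‖z‖ + 1 := by positivity
    have h2 : l ^ N * ((m:ℝ) + ‖z‖) ≤ (ε/2/((m:ℝ)+‖z‖+1)) * ((m:ℝ)+‖z‖) :=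
      mul_le_mul_of_nonneg_right (h1.trans hN₀.le) (by positivity)
    calc l ^ N * ((m:ℝ) + ‖z‖) ≤ (ε/2/((m:ℝ)+‖z‖+1)) * ((m:ℝ)+‖z‖) := h2
      _ ≤ ε/2 := by
        rw [div_mul_eq_mul_div, div_le_iff₀ hpos]
        nlinarith [norm_nonneg z]
  set δ : ℝ := ε / (2 * N) with hδ_def
  have hδpos : 0 < δ := by rw [hδ_def]; positivity
  have hNδ : (N:ℝ) * δ = ε/2 := by
    rw [hδ_def]; field_simp
  set M : ℕ := m + ⌈2 * ‖z‖⌉₊ + 1 with hM_def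
  have hMm : (m:ℝ) + 2*‖z‖ + 1 ≤ (M:ℝ) := by
    have h := Nat.le_ceil (2*‖z‖)
    rw [hM_def]; push_cast; linarith
  refine ⟨(δ/(1+δ))/2^M, by positivity, ?_⟩
  intro S hSne hrho
  have hbs_nonneg : 0 ≤ ballSup S C M := ballSup_nonneg hSne hCne M
  have hballs : ballSup S C M < δ := by
    apply lt_of_frac_lt hbs_nonneg hδpos.le
    have hfrac : ballSup S C M / (1 + ballSup S C M) ≤ 2^M * rho S C := by
      have h := ballSup_frac_le_rho hSne hCne (m + ⌈2*‖z‖⌉₊)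
      rw [hM_def]
      exact h
    calc ballSup S C M / (1 + ballSup S C M) ≤ 2^M * rho S C := hfrac
      _ < 2^M * ((δ/(1+δ))/2^M) := by
          apply mul_lt_mul_of_pos_left hrho (by positivity)
      _ = δ/(1+δ) := by field_simp
  have hSC : ∀ x : X, ‖x‖ ≤ (M:ℝ) → ‖S x - C x‖ < δ := fun x hx =>
    lt_of_le_of_lt (le_ballSup hSne hCne hx) hballs
  -- claim A
  have claimA : ∀ k, k ≤ N → ∀ x : X, ‖x‖ ≤ (m:ℝ) → ‖S^[k] x - C^[k] x‖ ≤ (k:ℝ) * δ := by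
    intro k
    induction k with
    | zero => intro _ x _; simp
    | succ k ih =>
      intro hk x hx
      have hk' : k ≤ N := Nat.le_of_succ_le hk
      have hIH := ih hk' x hx
      have hxz : ‖x - z‖ ≤ (m:ℝ) + ‖z‖ := by
        calc ‖x - z‖ ≤ ‖x‖ + ‖z‖ := norm_sub_le x z
          _ ≤ (m:ℝ) + ‖z‖ := by linarith
      have hCk : ‖C^[k] x - z‖ ≤ (m:ℝ) + ‖z‖ := by
        calc ‖C^[k] x - z‖ ≤ l ^ k * ‖x - z‖ := hrate k x
          _ ≤ 1 * ((m:ℝ) + ‖z‖) := by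
            apply mul_le_mul (pow_le_one₀ hl0 hl1.le) hxz (norm_nonneg _) one_pos.le
          _ = (m:ℝ) + ‖z‖ := one_mul _
      have hkδ : (k:ℝ) * δ ≤ ε/2 := by
        rw [← hNδ]
        apply mul_le_mul_of_nonneg_right _ hδpos.le
        exact_mod_cast hk'
      have hSk_norm : ‖S^[k] x‖ ≤ (M:ℝ) := by
        have h1 : ‖S^[k] x‖ ≤ ‖S^[k] x - C^[k] x‖ + ‖C^[k] x - z‖ + ‖z‖ := by
          calc ‖S^[k] x‖ = ‖(S^[k] x - C^[k] x) + (C^[k] x - z) + z‖ := by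
                congr 1; abel
            _ ≤ ‖(S^[k] x - C^[k] x) + (C^[k] x - z)‖ + ‖z‖ := norm_add_le _ _
            _ ≤ ‖S^[k] x - C^[k] x‖ + ‖C^[k] x - z‖ + ‖z‖ := by
                have := norm_add_le (S^[k] x - C^[k] x) (C^[k] x - z)
                linarith
        linarith
      rw [Function.iterate_succ_apply', Function.iterate_succ_apply']
      calc ‖S (S^[k] x) - C (C^[k] x)‖
          ≤ ‖S (S^[k] x) - C (S^[k] x)‖ + ‖C (S^[k] x) - C (C^[k] x)‖ :=
            norm_sub_le_three _ _ _
        _ ≤ δ + (k:ℝ) * δ := add_le_add (hSC _ hSk_norm).le ((hCne _ _).trans hIH)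
        _ = ((k+1 : ℕ):ℝ) * δ := by push_cast; ring
  -- claim B
  have claimB : ∀ x : X, ‖x‖ ≤ (m:ℝ) → ‖S^[N] x - z‖ ≤ ε := by
    intro x hx
    have h1 := claimA N le_rfl x hx
    have hxz : ‖x - z‖ ≤ (m:ℝ) + ‖z‖ := by
      calc ‖x - z‖ ≤ ‖x‖ + ‖z‖ := norm_sub_le x z
        _ ≤ (m:ℝ) + ‖z‖ := by linarith
    have h2 : ‖C^[N] x - z‖ ≤ ε/2 := by
      calc ‖C^[N] x - z‖ ≤ l ^ N * ‖x - z‖ := hrate N x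
        _ ≤ l ^ N * ((m:ℝ) + ‖z‖) := mul_le_mul_of_nonneg_left hxz (pow_nonneg hl0 N)
        _ ≤ ε/2 := hNrate
    calc ‖S^[N] x - z‖ ≤ ‖S^[N] x - C^[N] x‖ + ‖C^[N] x - z‖ := norm_sub_le_three _ _ _
      _ ≤ (N:ℝ) * δ + ε/2 := add_le_add h1 h2
      _ = ε := by rw [hNδ]; ring
  have hzM : ‖z‖ ≤ (M:ℝ) := by linarith [norm_nonneg z]
  -- claim C
  have claimC : ∀ j : ℕ, ‖S^[j] z - z‖ ≤ (j:ℝ) * δ := by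
    intro j
    induction j with
    | zero => simp
    | succ j ih =>
      rw [Function.iterate_succ_apply']
      have h2 : ‖S z - z‖ ≤ δ := by
        have h := (hSC z hzM).le
        rwa [hz] at h
      calc ‖S (S^[j] z) - z‖ ≤ ‖S (S^[j] z) - S z‖ + ‖S z - z‖ := norm_sub_le_three _ _ _
        _ ≤ ‖S^[j] z - z‖ + δ := add_le_add (hSne _ _) h2
        _ ≤ (j:ℝ) * δ + δ := by linarith
        _ = ((j+1 : ℕ):ℝ) * δ := by push_cast; ring
  -- claim D
  have claimD : ∀ k : ℕ, ∀ x : X, ‖x‖ ≤ (m:ℝ) → ‖S^[(k+1)*N] x - z‖ ≤ ε := by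
    intro k
    induction k with
    | zero => intro x hx; simpa using claimB x hx
    | succ k ih =>
      intro x hx
      have hprev := ih x hx
      have hsplit : S^[(k+2)*N] x = S^[N] (S^[(k+1)*N] x) := by
        rw [show (k+2)*N = N + (k+1)*N by ring, Function.iterate_add_apply]
      rw [show k+1+1 = k+2 by ring, hsplit]
      apply claimB
      have h1 : ‖S^[(k+1)*N] x‖ ≤ ‖S^[(k+1)*N] x - z‖ + ‖z‖ := by
        calc ‖S^[(k+1)*N] x‖ = ‖(S^[(k+1)*N] x - z) + z‖ := by congr 1; abel
          _ ≤ ‖S^[(k+1)*N] x - z‖ + ‖z‖ := norm_add_le _ _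
      linarith
  refine ⟨z, N, ?_⟩
  intro n hn x hx
  have hxm : ‖x‖ ≤ (m:ℝ) := le_trans hx hmq
  have hNpos : 0 < N := hN1
  have hk1 : 1 ≤ n / N := (Nat.one_le_div_iff hNpos).mpr hn
  have hsplit : S^[n] x = S^[n % N] (S^[(n/N)*N] x) := by
    rw [← Function.iterate_add_apply]
    congr 1
    exact (Nat.mod_add_div' n N).symm
  have hD : ‖S^[(n/N)*N] x - z‖ ≤ ε := by
    have h := claimD (n/N - 1) x hxm
    have he : n / N - 1 + 1 = n / N := by omega
    rwa [he] at h
  have hrem : ‖S^[n % N] z - z‖ ≤ ε/2 := by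
    calc ‖S^[n % N] z - z‖ ≤ ((n % N : ℕ):ℝ) * δ := claimC _
      _ ≤ (N:ℝ) * δ := by
          apply mul_le_mul_of_nonneg_right _ hδpos.le
          exact_mod_cast (Nat.mod_lt n hNpos).le
      _ = ε/2 := hNδ
  rw [hsplit]
  calc ‖S^[n % N] (S^[(n/N)*N] x) - z‖
      ≤ ‖S^[n % N] (S^[(n/N)*N] x) - S^[n % N] z‖ + ‖S^[n % N] z - z‖ :=
        norm_sub_le_three _ _ _
    _ ≤ ‖S^[(n/N)*N] x - z‖ + ε/2 := add_le_add (hSne.iterate _ _ _) hrem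
    _ ≤ ε + ε/2 := by linarith
    _ ≤ 1/((q:ℝ)+1) := by
        have heq : (1:ℝ)/(2*((q:ℝ)+1)) + 1/(2*((q:ℝ)+1))/2 = 3/(4*((q:ℝ)+1)) := by
          field_simp; ring
        rw [hε_def, heq, div_le_div_iff₀ (by linarith) (by linarith)]
        linarith

/-- generic super-regularity in complete subspaces of `(N(X), ρ)`. -/
theorem generic_superRegular_subspace (F : Set (X → X)) (hF : ∀ T ∈ F, Nonexpansive T)
    (d : (X → X) → (X → X) → ℝ)
    (hd_nonneg : ∀ T₁ ∈ F, ∀ T₂ ∈ F, 0 ≤ d T₁ T₂)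
    (hd_symm : ∀ T₁ ∈ F, ∀ T₂ ∈ F, d T₁ T₂ = d T₂ T₁)
    (hd_triangle : ∀ T₁ ∈ F, ∀ T₂ ∈ F, ∀ T₃ ∈ F, d T₁ T₃ ≤ d T₁ T₂ + d T₂ T₃)
    (hd_eq : ∀ T₁ ∈ F, ∀ T₂ ∈ F, (d T₁ T₂ = 0 ↔ T₁ = T₂))
    (hd_complete : ∀ T : ℕ → X → X, (∀ k, T k ∈ F) →
      (∀ ε : ℝ, 0 < ε → ∃ N : ℕ, ∀ j ≥ N, ∀ k ≥ N, d (T j) (T k) < ε) →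
      ∃ S ∈ F, Tendsto (fun k => d (T k) S) atTop (nhds 0))
    (hd_ge : ∀ T₁ ∈ F, ∀ T₂ ∈ F, rho T₁ T₂ ≤ d T₁ T₂)
    (hdense : ∀ T ∈ F, ∀ ε : ℝ, 0 < ε → ∃ C ∈ F, Contraction C ∧ d C T < ε) :
    ∃ O : ℕ → Set (X → X),
      (∀ q, O q ⊆ F) ∧
      (∀ q, ∀ T ∈ O q, ∃ r > (0 : ℝ), ∀ S ∈ F, d S T < r → S ∈ O q) ∧
      (∀ q, ∀ T ∈ F, ∀ ε : ℝ, 0 < ε → ∃ S ∈ O q, d S T < ε) ∧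
      (∀ T ∈ ⋂ q, O q, SuperRegular T ∧ ∃! x : X, T x = x) := by
  classical
  set O : ℕ → Set (X → X) := fun q =>
    {T | T ∈ F ∧ ∃ r > (0:ℝ), ∀ S ∈ F, d S T < r →
      ∃ y : X, ∃ N : ℕ, ∀ n ≥ N, ∀ x : X, ‖x‖ ≤ (q:ℝ) → ‖S^[n] x - y‖ ≤ 1/((q:ℝ)+1)}
    with hO
  refine ⟨O, ?_, ?_, ?_, ?_⟩
  · intro q T hT; exact hT.1
  · -- openness
    intro q T hT
    obtain ⟨r, hr, hball⟩ := hT.2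
    refine ⟨r/2, by linarith, ?_⟩
    intro S hSF hST
    refine ⟨hSF, r/2, by linarith, ?_⟩
    intro S' hS'F hS'S
    apply hball S' hS'F
    calc d S' T ≤ d S' S + d S T := hd_triangle S' hS'F S hSF T hT.1
      _ < r/2 + r/2 := add_lt_add hS'S hST
      _ = r := by ring
  · -- density
    intro q T hTF ε hε
    obtain ⟨C, hCF, hCcon, hCT⟩ := hdense T hTF ε hε
    obtain ⟨r₀, hr₀, hkey⟩ := key_contraction (hF C hCF) hCcon q
    refine ⟨C, ⟨hCF, r₀, hr₀, ?_⟩, hCT⟩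
    intro S hSF hSC
    exact hkey S (hF S hSF) (lt_of_le_of_lt (hd_ge S hSF C hCF) hSC)
  · -- intersection
    intro T hT
    simp only [Set.mem_iInter] at hT
    have hTF : T ∈ F := (hT 0).1
    have hTne : Nonexpansive T := hF T hTF
    have hP : ∀ q : ℕ, ∃ y : X, ∃ N : ℕ, ∀ n ≥ N, ∀ x : X,
        ‖x‖ ≤ (q:ℝ) → ‖T^[n] x - y‖ ≤ 1/((q:ℝ)+1) := by
      intro q
      obtain ⟨_, r, hr, hball⟩ := hT q
      have hdTT : d T T = 0 := (hd_eq T hTF T hTF).mpr rfl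
      exact hball T hTF (by rw [hdTT]; exact hr)
    choose y N hyN using hP
    have hyy : ∀ p q : ℕ, ‖y p - y q‖ ≤ 1/((p:ℝ)+1) + 1/((q:ℝ)+1) := by
      intro p q
      set n := max (N p) (N q) with hn_def
      have h1 := hyN p n (le_max_left _ _) 0 (by simp)
      have h2 := hyN q n (le_max_right _ _) 0 (by simp)
      calc ‖y p - y q‖ ≤ ‖y p - T^[n] 0‖ + ‖T^[n] 0 - y q‖ := norm_sub_le_three _ _ _
        _ ≤ 1/((p:ℝ)+1) + 1/((q:ℝ)+1) := add_le_add (by rwa [norm_sub_rev]) h2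
    have hcauchy : CauchySeq y := by
      apply cauchySeq_of_le_tendsto_0 (fun n : ℕ => 2/((n:ℝ)+1))
      · intro p q K hp hq
        rw [dist_eq_norm]
        have h1 : 1/((p:ℝ)+1) ≤ 1/((K:ℝ)+1) := by
          apply one_div_le_one_div_of_le (by positivity)
          have : (K:ℝ) ≤ (p:ℝ) := by exact_mod_cast hp
          linarith
        have h2 : 1/((q:ℝ)+1) ≤ 1/((K:ℝ)+1) := by
          apply one_div_le_one_div_of_le (by positivity)
          have : (K:ℝ) ≤ (q:ℝ) := by exact_mod_cast hq
          linarith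
        have := hyy p q
        calc ‖y p - y q‖ ≤ 1/((p:ℝ)+1) + 1/((q:ℝ)+1) := this
          _ ≤ 1/((K:ℝ)+1) + 1/((K:ℝ)+1) := add_le_add h1 h2
          _ = 2/((K:ℝ)+1) := by ring
      · have h2 := Filter.Tendsto.const_mul (2:ℝ) tendsto_one_div_add_atTop_nhds_zero_nat
        simp only [mul_one_div, mul_zero] at h2
        exact h2
    obtain ⟨xT, hxT⟩ := cauchySeq_tendsto_of_complete hcauchy
    have hylim : ∀ q : ℕ, ‖y q - xT‖ ≤ 2/((q:ℝ)+1) := by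
      intro q
      have htend : Tendsto (fun p => ‖y q - y p‖) atTop (nhds ‖y q - xT‖) :=
        (Filter.Tendsto.const_sub (y q) hxT).norm
      apply le_of_tendsto htend
      filter_upwards [eventually_ge_atTop q] with p hp
      have h1 : 1/((p:ℝ)+1) ≤ 1/((q:ℝ)+1) := by
        apply one_div_le_one_div_of_le (by positivity)
        have : (q:ℝ) ≤ (p:ℝ) := by exact_mod_cast hp
        linarith
      have := hyy q p
      have h2 : (2:ℝ)/((q:ℝ)+1) = 1/((q:ℝ)+1) + 1/((q:ℝ)+1) := by ring
      linarith
    have hsr : SuperRegularAt T xT := by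
      intro s hs ε hε
      obtain ⟨q, hq⟩ := exists_nat_gt (max s (3/ε))
      have hqs : s ≤ (q:ℝ) := le_of_lt (lt_of_le_of_lt (le_max_left _ _) hq)
      have hqe : 3/ε < (q:ℝ) := lt_of_le_of_lt (le_max_right _ _) hq
      have hq1 : (0:ℝ) < (q:ℝ)+1 := by positivity
      have h3 : 3/((q:ℝ)+1) < ε := by
        rw [div_lt_iff₀ hq1]
        rw [div_lt_iff₀ hε] at hqe
        nlinarith
      refine ⟨N q, ?_⟩
      intro n hn x hx
      have h1 := hyN q n hn x (le_trans hx hqs)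
      calc ‖T^[n] x - xT‖ ≤ ‖T^[n] x - y q‖ + ‖y q - xT‖ := norm_sub_le_three _ _ _
        _ ≤ 1/((q:ℝ)+1) + 2/((q:ℝ)+1) := add_le_add h1 (hylim q)
        _ = 3/((q:ℝ)+1) := by ring
        _ < ε := h3
    have hfix : T xT = xT := by
      by_contra hne
      have hpos : 0 < ‖T xT - xT‖ := by
        rw [norm_pos_iff, sub_ne_zero]; exact hne
      obtain ⟨N', hN'⟩ := hsr (‖xT‖ + 1) (by positivity) (‖T xT - xT‖/2) (by positivity)
      have h1 := hN' N' le_rfl xT (by linarith [norm_nonneg xT])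
      have h2 := hN' (N'+1) (by omega) xT (by linarith [norm_nonneg xT])
      rw [Function.iterate_succ_apply'] at h2
      have h3 : ‖T xT - T (T^[N'] xT)‖ ≤ ‖xT - T^[N'] xT‖ := hTne _ _
      have h4 : ‖T xT - xT‖ ≤ ‖T xT - T (T^[N'] xT)‖ + ‖T (T^[N'] xT) - xT‖ :=
        norm_sub_le_three _ _ _
      rw [norm_sub_rev] at h1
      linarith
    refine ⟨⟨xT, hsr⟩, xT, hfix, ?_⟩
    intro w hw
    have hit : ∀ n, T^[n] w = w := fun n => Function.IsFixedPt.iterate hw n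
    by_contra hne
    have hpos : 0 < ‖w - xT‖ := by rw [norm_pos_iff, sub_ne_zero]; exact hne
    obtain ⟨N', hN'⟩ := hsr (‖w‖ + 1) (by positivity) ‖w - xT‖ hpos
    have h1 := hN' N' le_rfl w (by linarith [norm_nonneg w])
    rw [hit N'] at h1
    exact lt_irrefl _ h1
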